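/- Idempotence of the R-LINEAR EQUALITY rule for a single constraint: applying the R-LINEAR EQUALITY reduction to a single linear equality over real intervals, and then applying it a second time to the resulting intervals, yields the same intervals as after the first application (provided the first application does not yield an empty interval). -/
import Mathlib


open Finset

/-- The lower bounds produced by one application of the ℝ-LINEAR EQUALITY rule. -/
noncomputable def reduceL (n p : ℕ) (a : Fin n → ℝ) (b : ℝ) (l h : Fin n → ℝ) : Fin n → ℝ :=
  fun j =>
    if (j : ℕ) < p then
      max (l j)
        ((b - ∑ i ∈ (Finset.univ.filter (fun i : Fin n => (i : ℕ) < p)).erase j, a i * h i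
            + ∑ i ∈ Finset.univ.filter (fun i : Fin n => ¬ (i : ℕ) < p), a i * l i) / a j)
    else
      max (l j)
        ((-b + ∑ i ∈ Finset.univ.filter (fun i : Fin n => (i : ℕ) < p), a i * l i
             - ∑ i ∈ (Finset.univ.filter (fun i : Fin n => ¬ (i : ℕ) < p)).erase j, a i * h i) / a j)

/-- The upper bounds produced by one application of the ℝ-LINEAR EQUALITY rule. -/
noncomputable def reduceH (n p : ℕ) (a : Fin n → ℝ) (b : ℝ) (l h : Fin n → ℝ) : Fin n → ℝ :=
  fun j =>
    if (j : ℕ) < p then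
      min (h j)
        ((b - ∑ i ∈ (Finset.univ.filter (fun i : Fin n => (i : ℕ) < p)).erase j, a i * l i
            + ∑ i ∈ Finset.univ.filter (fun i : Fin n => ¬ (i : ℕ) < p), a i * h i) / a j)
    else
      min (h j)
        ((-b + ∑ i ∈ Finset.univ.filter (fun i : Fin n => (i : ℕ) < p), a i * h i
             - ∑ i ∈ (Finset.univ.filter (fun i : Fin n => ¬ (i : ℕ) < p)).erase j, a i * l i) / a j)

/-- Abstract arc-consistency lemma, in terms of signed coefficients `c`. -/
private lemma key_lemma {n : ℕ} (c : Fin n → ℝ) (b : ℝ) (m0 M0 m1 M1 : Fin n → ℝ)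
    (h1 : ∀ j, b - ∑ i ∈ Finset.univ.erase j, c i * M0 i ≤ c j * m1 j)
    (h3 : ∀ j, c j * m0 j ≤ c j * m1 j)
    (h5 : ∀ j, c j * m1 j ≤ c j * M1 j)
    (h6 : ∀ j, c j * M1 j ≠ c j * M0 j →
      c j * M1 j = b - ∑ i ∈ Finset.univ.erase j, c i * m0 i) :
    ∀ j, b - ∑ i ∈ Finset.univ.erase j, c i * M1 i ≤ c j * m1 j := by
  intro j
  by_cases hc : ∀ i ∈ Finset.univ.erase j, c i * M1 i = c i * M0 i
  · have heq : ∑ i ∈ Finset.univ.erase j, c i * M1 i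
        = ∑ i ∈ Finset.univ.erase j, c i * M0 i := Finset.sum_congr rfl hc
    rw [heq]; exact h1 j
  · push_neg at hc
    obtain ⟨k, hk, hkne⟩ := hc
    have hkj : k ≠ j := Finset.ne_of_mem_erase hk
    have hkeq : c k * M1 k = b - ∑ i ∈ Finset.univ.erase k, c i * m0 i := h6 k hkne
    have hjk : j ∈ Finset.univ.erase k :=
      Finset.mem_erase.2 ⟨fun hh => hkj hh.symm, Finset.mem_univ j⟩
    have hsplit1 : ∑ i ∈ Finset.univ.erase k, c i * m0 i
        = c j * m0 j + ∑ i ∈ (Finset.univ.erase k).erase j, c i * m0 i :=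
      (Finset.add_sum_erase _ _ hjk).symm
    have hsplit2 : ∑ i ∈ Finset.univ.erase j, c i * M1 i
        = c k * M1 k + ∑ i ∈ (Finset.univ.erase j).erase k, c i * M1 i :=
      (Finset.add_sum_erase _ _ hk).symm
    have hcomm : (Finset.univ.erase j).erase k = (Finset.univ.erase k).erase j :=
      Finset.erase_right_comm
    have hsum : ∑ i ∈ (Finset.univ.erase k).erase j, c i * m0 i
        ≤ ∑ i ∈ (Finset.univ.erase k).erase j, c i * M1 i :=
      Finset.sum_le_sum fun i _ => le_trans (h3 i) (h5 i)
    have h3j := h3 j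
    rw [hsplit2, hcomm]
    rw [hsplit1] at hkeq
    linarith

/-- Dual direction, obtained by negating coefficients. -/
private lemma key_lemma' {n : ℕ} (c : Fin n → ℝ) (b : ℝ) (m0 M0 m1 M1 : Fin n → ℝ)
    (h2 : ∀ j, c j * M1 j ≤ b - ∑ i ∈ Finset.univ.erase j, c i * m0 i)
    (h4 : ∀ j, c j * M1 j ≤ c j * M0 j)
    (h5 : ∀ j, c j * m1 j ≤ c j * M1 j)
    (h7 : ∀ j, c j * m1 j ≠ c j * m0 j →
      c j * m1 j = b - ∑ i ∈ Finset.univ.erase j, c i * M0 i) :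
    ∀ j, c j * M1 j ≤ b - ∑ i ∈ Finset.univ.erase j, c i * m1 i := by
  have key := key_lemma (fun i => -c i) (-b) M0 m0 M1 m1
    (by intro j; simp only [neg_mul, Finset.sum_neg_distrib]; have := h2 j; linarith)
    (by intro j; simp only [neg_mul]; have := h4 j; linarith)
    (by intro j; simp only [neg_mul]; have := h5 j; linarith)
    (by
      intro j hne
      simp only [neg_mul] at hne ⊢
      have hne' : c j * m1 j ≠ c j * m0 j := fun hh => hne (by rw [hh])
      have := h7 j hne'
      simp only [Finset.sum_neg_distrib]
      linarith)
  intro j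
  have := key j
  simp only [neg_mul, Finset.sum_neg_distrib] at this
  linarith

private lemma sum_signed {n : ℕ} (p : ℕ) (a u v : Fin n → ℝ) (s : Finset (Fin n)) :
    ∑ i ∈ s, (if (i : ℕ) < p then a i else -a i) * (if (i : ℕ) < p then u i else v i)
      = ∑ i ∈ s.filter (fun i : Fin n => (i : ℕ) < p), a i * u i
        - ∑ i ∈ s.filter (fun i : Fin n => ¬ (i : ℕ) < p), a i * v i := by
  rw [← Finset.sum_filter_add_sum_filter_not s (fun i : Fin n => (i : ℕ) < p)
    (fun i => (if (i : ℕ) < p then a i else -a i) * (if (i : ℕ) < p then u i else v i))]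
  have e1 : ∑ i ∈ s.filter (fun i : Fin n => (i : ℕ) < p),
      (if (i : ℕ) < p then a i else -a i) * (if (i : ℕ) < p then u i else v i)
      = ∑ i ∈ s.filter (fun i : Fin n => (i : ℕ) < p), a i * u i := by
    refine Finset.sum_congr rfl fun i hi => ?_
    have := (Finset.mem_filter.1 hi).2
    simp [this]
  have e2 : ∑ i ∈ s.filter (fun i : Fin n => ¬ (i : ℕ) < p),
      (if (i : ℕ) < p then a i else -a i) * (if (i : ℕ) < p then u i else v i)
      = ∑ i ∈ s.filter (fun i : Fin n => ¬ (i : ℕ) < p), -(a i * v i) := by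
    refine Finset.sum_congr rfl fun i hi => ?_
    have := (Finset.mem_filter.1 hi).2
    simp [this]
  rw [e1, e2, Finset.sum_neg_distrib]
  ring

private lemma erase_signed_pos {n p : ℕ} (a u v : Fin n → ℝ) {j : Fin n} (hj : (j : ℕ) < p) :
    ∑ i ∈ Finset.univ.erase j,
        (if (i : ℕ) < p then a i else -a i) * (if (i : ℕ) < p then u i else v i)
      = ∑ i ∈ (Finset.univ.filter (fun i : Fin n => (i : ℕ) < p)).erase j, a i * u i
        - ∑ i ∈ Finset.univ.filter (fun i : Fin n => ¬ (i : ℕ) < p), a i * v i := by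
  rw [sum_signed p a u v, Finset.filter_erase, Finset.filter_erase,
    Finset.erase_eq_of_notMem
      (s := Finset.univ.filter (fun i : Fin n => ¬ (i : ℕ) < p))
      (fun hmem => (Finset.mem_filter.1 hmem).2 hj)]

private lemma erase_signed_neg {n p : ℕ} (a u v : Fin n → ℝ) {j : Fin n} (hj : ¬ (j : ℕ) < p) :
    ∑ i ∈ Finset.univ.erase j,
        (if (i : ℕ) < p then a i else -a i) * (if (i : ℕ) < p then u i else v i)
      = ∑ i ∈ Finset.univ.filter (fun i : Fin n => (i : ℕ) < p), a i * u i
        - ∑ i ∈ (Finset.univ.filter (fun i : Fin n => ¬ (i : ℕ) < p)).erase j, a i * v i := by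
  rw [sum_signed p a u v, Finset.filter_erase, Finset.filter_erase,
    Finset.erase_eq_of_notMem
      (s := Finset.univ.filter (fun i : Fin n => (i : ℕ) < p))
      (fun hmem => hj (Finset.mem_filter.1 hmem).2)]

theorem rlinear_equality_idempotent
    (n p : ℕ) (a l h : Fin n → ℝ) (b : ℝ)
    (ha : ∀ i, 0 < a i)
    (hne : ∀ i, reduceL n p a b l h i ≤ reduceH n p a b l h i) :
    reduceL n p a b (reduceL n p a b l h) (reduceH n p a b l h) = reduceL n p a b l h ∧
    reduceH n p a b (reduceL n p a b l h) (reduceH n p a b l h) = reduceH n p a b l h := by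
  classical
  set l' := reduceL n p a b l h with hl'
  set h' := reduceH n p a b l h with hh'
  set c : Fin n → ℝ := fun i => if (i : ℕ) < p then a i else -a i with hc
  set m0 : Fin n → ℝ := fun i => if (i : ℕ) < p then l i else h i with hm0
  set M0 : Fin n → ℝ := fun i => if (i : ℕ) < p then h i else l i with hM0
  set m1 : Fin n → ℝ := fun i => if (i : ℕ) < p then l' i else h' i with hm1
  set M1 : Fin n → ℝ := fun i => if (i : ℕ) < p then h' i else l' i with hM1
  -- basic bounds on l', h'
  have hll' : ∀ i, l i ≤ l' i := by
    intro i
    rw [hl']; unfold reduceL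
    by_cases hi : (i : ℕ) < p <;> simp [hi]
  have hh'h : ∀ i, h' i ≤ h i := by
    intro i
    rw [hh']; unfold reduceH
    by_cases hi : (i : ℕ) < p <;> simp [hi]
  -- F1
  have hF1 : ∀ j, b - ∑ i ∈ Finset.univ.erase j, c i * M0 i ≤ c j * m1 j := by
    intro j
    by_cases hj : (j : ℕ) < p
    · simp only [hc, hm1, hM0]
      rw [erase_signed_pos a h l hj]
      simp only [if_pos hj]
      have hmax : (b - ∑ i ∈ (Finset.univ.filter (fun i : Fin n => (i : ℕ) < p)).erase j,
            a i * h i + ∑ i ∈ Finset.univ.filter (fun i : Fin n => ¬ (i : ℕ) < p), a i * l i)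
            / a j ≤ l' j := by
        rw [hl']; unfold reduceL; rw [if_pos hj]; exact le_max_right _ _
      have := (div_le_iff₀ (ha j)).1 hmax
      have hcm := mul_comm (l' j) (a j)
      linarith
    · simp only [hc, hm1, hM0]
      rw [erase_signed_neg a h l hj]
      simp only [if_neg hj]
      have hmin : h' j ≤ (-b + ∑ i ∈ Finset.univ.filter (fun i : Fin n => (i : ℕ) < p),
            a i * h i - ∑ i ∈ (Finset.univ.filter (fun i : Fin n => ¬ (i : ℕ) < p)).erase j,
            a i * l i) / a j := by
        rw [hh']; unfold reduceH; rw [if_neg hj]; exact min_le_right _ _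
      have := (le_div_iff₀ (ha j)).1 hmin
      have hcm := mul_comm (h' j) (a j)
      linarith
  -- F2
  have hF2 : ∀ j, c j * M1 j ≤ b - ∑ i ∈ Finset.univ.erase j, c i * m0 i := by
    intro j
    by_cases hj : (j : ℕ) < p
    · simp only [hc, hM1, hm0]
      rw [erase_signed_pos a l h hj]
      simp only [if_pos hj]
      have hmin : h' j ≤ (b - ∑ i ∈ (Finset.univ.filter (fun i : Fin n => (i : ℕ) < p)).erase j,
            a i * l i + ∑ i ∈ Finset.univ.filter (fun i : Fin n => ¬ (i : ℕ) < p), a i * h i)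
            / a j := by
        rw [hh']; unfold reduceH; rw [if_pos hj]; exact min_le_right _ _
      have := (le_div_iff₀ (ha j)).1 hmin
      have hcm := mul_comm (h' j) (a j)
      linarith
    · simp only [hc, hM1, hm0]
      rw [erase_signed_neg a l h hj]
      simp only [if_neg hj]
      have hmax : (-b + ∑ i ∈ Finset.univ.filter (fun i : Fin n => (i : ℕ) < p),
            a i * l i - ∑ i ∈ (Finset.univ.filter (fun i : Fin n => ¬ (i : ℕ) < p)).erase j,
            a i * h i) / a j ≤ l' j := by
        rw [hl']; unfold reduceL; rw [if_neg hj]; exact le_max_right _ _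
      have := (div_le_iff₀ (ha j)).1 hmax
      have hcm := mul_comm (l' j) (a j)
      linarith
  -- F3
  have hF3 : ∀ j, c j * m0 j ≤ c j * m1 j := by
    intro j
    by_cases hj : (j : ℕ) < p <;> simp only [hc, hm0, hm1, if_pos, if_neg, hj, ite_true,
      ite_false]
    · exact mul_le_mul_of_nonneg_left (hll' j) (le_of_lt (ha j))
    · have := hh'h j
      have := (ha j).le
      nlinarith
  -- F4
  have hF4 : ∀ j, c j * M1 j ≤ c j * M0 j := by
    intro j
    by_cases hj : (j : ℕ) < p <;> simp only [hc, hM0, hM1, hj, ite_true, ite_false]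
    · exact mul_le_mul_of_nonneg_left (hh'h j) (le_of_lt (ha j))
    · have := hll' j
      have := (ha j).le
      nlinarith
  -- F5
  have hF5 : ∀ j, c j * m1 j ≤ c j * M1 j := by
    intro j
    by_cases hj : (j : ℕ) < p <;> simp only [hc, hm1, hM1, hj, ite_true, ite_false]
    · exact mul_le_mul_of_nonneg_left (hne j) (le_of_lt (ha j))
    · have := hne j
      have := (ha j).le
      nlinarith
  -- F6
  have hF6 : ∀ j, c j * M1 j ≠ c j * M0 j →
      c j * M1 j = b - ∑ i ∈ Finset.univ.erase j, c i * m0 i := by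
    intro j hnej
    by_cases hj : (j : ℕ) < p
    · simp only [hc, hM1, hM0, hj, ite_true] at hnej ⊢
      rw [erase_signed_pos a l h hj]
      have hne2 : h' j ≠ h j := fun hh => hnej (by rw [hh])
      have hval : h' j = (b - ∑ i ∈ (Finset.univ.filter
            (fun i : Fin n => (i : ℕ) < p)).erase j, a i * l i
            + ∑ i ∈ Finset.univ.filter (fun i : Fin n => ¬ (i : ℕ) < p), a i * h i) / a j := by
        have : h' j = h j ∨ h' j = (b - ∑ i ∈ (Finset.univ.filter
            (fun i : Fin n => (i : ℕ) < p)).erase j, a i * l i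
            + ∑ i ∈ Finset.univ.filter (fun i : Fin n => ¬ (i : ℕ) < p), a i * h i) / a j := by
          rw [hh']; unfold reduceH; rw [if_pos hj]; exact min_choice _ _
        tauto
      rw [hval, mul_div_cancel₀ _ (ne_of_gt (ha j))]
      ring
    · simp only [hc, hM1, hM0, hj, ite_false] at hnej ⊢
      rw [erase_signed_neg a l h hj]
      have hne2 : l' j ≠ l j := by
        intro hh; exact hnej (by rw [hh])
      have hval : l' j = (-b + ∑ i ∈ Finset.univ.filter (fun i : Fin n => (i : ℕ) < p),
            a i * l i - ∑ i ∈ (Finset.univ.filter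
            (fun i : Fin n => ¬ (i : ℕ) < p)).erase j, a i * h i) / a j := by
        have : l' j = l j ∨ l' j = (-b + ∑ i ∈ Finset.univ.filter
            (fun i : Fin n => (i : ℕ) < p), a i * l i - ∑ i ∈ (Finset.univ.filter
            (fun i : Fin n => ¬ (i : ℕ) < p)).erase j, a i * h i) / a j := by
          rw [hl']; unfold reduceL; rw [if_neg hj]; exact max_choice _ _
        tauto
      rw [hval, neg_mul, mul_div_cancel₀ _ (ne_of_gt (ha j))]
      ring
  -- F7
  have hF7 : ∀ j, c j * m1 j ≠ c j * m0 j →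
      c j * m1 j = b - ∑ i ∈ Finset.univ.erase j, c i * M0 i := by
    intro j hnej
    by_cases hj : (j : ℕ) < p
    · simp only [hc, hm1, hm0, hM0, hj, ite_true] at hnej ⊢
      rw [erase_signed_pos a h l hj]
      have hne2 : l' j ≠ l j := fun hh => hnej (by rw [hh])
      have hval : l' j = (b - ∑ i ∈ (Finset.univ.filter
            (fun i : Fin n => (i : ℕ) < p)).erase j, a i * h i
            + ∑ i ∈ Finset.univ.filter (fun i : Fin n => ¬ (i : ℕ) < p), a i * l i) / a j := by
        have : l' j = l j ∨ l' j = (b - ∑ i ∈ (Finset.univ.filter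
            (fun i : Fin n => (i : ℕ) < p)).erase j, a i * h i
            + ∑ i ∈ Finset.univ.filter (fun i : Fin n => ¬ (i : ℕ) < p), a i * l i) / a j := by
          rw [hl']; unfold reduceL; rw [if_pos hj]; exact max_choice _ _
        tauto
      rw [hval, mul_div_cancel₀ _ (ne_of_gt (ha j))]
      ring
    · simp only [hc, hm1, hm0, hM0, hj, ite_false] at hnej ⊢
      rw [erase_signed_neg a h l hj]
      have hne2 : h' j ≠ h j := fun hh => hnej (by rw [hh])
      have hval : h' j = (-b + ∑ i ∈ Finset.univ.filter (fun i : Fin n => (i : ℕ) < p),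
            a i * h i - ∑ i ∈ (Finset.univ.filter
            (fun i : Fin n => ¬ (i : ℕ) < p)).erase j, a i * l i) / a j := by
        have : h' j = h j ∨ h' j = (-b + ∑ i ∈ Finset.univ.filter
            (fun i : Fin n => (i : ℕ) < p), a i * h i - ∑ i ∈ (Finset.univ.filter
            (fun i : Fin n => ¬ (i : ℕ) < p)).erase j, a i * l i) / a j := by
          rw [hh']; unfold reduceH; rw [if_neg hj]; exact min_choice _ _
        tauto
      rw [hval, neg_mul, mul_div_cancel₀ _ (ne_of_gt (ha j))]
      ring
  -- arc consistency
  have hlow : ∀ j, b - ∑ i ∈ Finset.univ.erase j, c i * M1 i ≤ c j * m1 j :=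
    key_lemma c b m0 M0 m1 M1 hF1 hF3 hF5 hF6
  have hup : ∀ j, c j * M1 j ≤ b - ∑ i ∈ Finset.univ.erase j, c i * m1 i :=
    key_lemma' c b m0 M0 m1 M1 hF2 hF4 hF5 hF7
  constructor
  · funext j
    unfold reduceL
    by_cases hj : (j : ℕ) < p
    · rw [if_pos hj]
      have hkey := hlow j
      simp only [hc, hm1, hM1, hj, ite_true] at hkey
      rw [erase_signed_pos a h' l' hj] at hkey
      have hdiv : (b - ∑ i ∈ (Finset.univ.filter (fun i : Fin n => (i : ℕ) < p)).erase j,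
            a i * h' i + ∑ i ∈ Finset.univ.filter (fun i : Fin n => ¬ (i : ℕ) < p), a i * l' i)
            / a j ≤ l' j := by
        rw [div_le_iff₀ (ha j)]
        have hcm := mul_comm (l' j) (a j)
        linarith
      exact max_eq_left hdiv
    · rw [if_neg hj]
      have hkey := hup j
      simp only [hc, hm1, hM1, hj, ite_false] at hkey
      rw [erase_signed_neg a l' h' hj] at hkey
      have hdiv : (-b + ∑ i ∈ Finset.univ.filter (fun i : Fin n => (i : ℕ) < p), a i * l' i
            - ∑ i ∈ (Finset.univ.filter (fun i : Fin n => ¬ (i : ℕ) < p)).erase j, a i * h' i)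
            / a j ≤ l' j := by
        rw [div_le_iff₀ (ha j)]
        have hcm := mul_comm (l' j) (a j)
        nlinarith [ha j]
      exact max_eq_left hdiv
  · funext j
    unfold reduceH
    by_cases hj : (j : ℕ) < p
    · rw [if_pos hj]
      have hkey := hup j
      simp only [hc, hm1, hM1, hj, ite_true] at hkey
      rw [erase_signed_pos a l' h' hj] at hkey
      have hdiv : h' j ≤ (b - ∑ i ∈ (Finset.univ.filter (fun i : Fin n => (i : ℕ) < p)).erase j,
            a i * l' i + ∑ i ∈ Finset.univ.filter (fun i : Fin n => ¬ (i : ℕ) < p), a i * h' i)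
            / a j := by
        rw [le_div_iff₀ (ha j)]
        have hcm := mul_comm (h' j) (a j)
        linarith
      exact min_eq_left hdiv
    · rw [if_neg hj]
      have hkey := hlow j
      simp only [hc, hm1, hM1, hj, ite_false] at hkey
      rw [erase_signed_neg a h' l' hj] at hkey
      have hdiv : h' j ≤ (-b + ∑ i ∈ Finset.univ.filter (fun i : Fin n => (i : ℕ) < p),
            a i * h' i - ∑ i ∈ (Finset.univ.filter (fun i : Fin n => ¬ (i : ℕ) < p)).erase j,
            a i * l' i) / a j := by
        rw [le_div_iff₀ (ha j)]
        have hcm := mul_comm (h' j) (a j)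
        nlinarith [ha j]
      exact min_eq_left hdiv
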